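/- Let R be a (not necessarily commutative) ring, q ≥ 1, x₁,…,x_{q−1}, b ∈ R, and let E_{ij} denote the q × q matrix with (i,j)-entry 1 and all other entries 0. Then (∏_{i=1}^{q−1}(1 − x_i E_{i,i+1})) · (b E_{q1}) = ∑_{j=1}^{q} (−1)^{q−j} (x_j x_{j+1} ⋯ x_{q−1}) b E_{j1}, where the product over i is taken in increasing order of i and the empty product x_q ⋯ x_{q−1} is 1. -/

import Mathlib

/-!
STATEMENT 18. Let `R` be a (not necessarily commutative) ring, `q ≥ 1`,
`x₁, …, x_{q−1}, b ∈ R`, and let `E_{ij}` denote the `q × q` matrix with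
`(i,j)`-entry `1` and all other entries `0`.  Then
`(∏_{i=1}^{q−1} (1 − x_i E_{i,i+1})) · (b E_{q1})
  = ∑_{j=1}^{q} (−1)^{q−j} (x_j x_{j+1} ⋯ x_{q−1}) b E_{j1}`,
where the product over `i` is taken in increasing order of `i` and the empty
product `x_q ⋯ x_{q−1}` is `1`.

Here indices are `0`-based: the `1`-indexed `x_i` (for `1 ≤ i ≤ q−1`) is
`x ⟨i−1, _⟩ : Fin (q−1) → R`, the matrix unit `E_{i,i+1}` is
`Matrix.single ⟨i−1, _⟩ ⟨i, _⟩ 1`, and for the `1`-indexed `j`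
(with `1 ≤ j ≤ q`) the sign `(−1)^{q−j}` is `(−1)^(q−1−j.val)` and the
ordered product `x_j ⋯ x_{q−1}` is the product of the list obtained from
`x₁, …, x_{q−1}` by dropping the first `j−1` entries.
-/
lemma std_neg {m : Type*} [DecidableEq m] {R : Type*} [Ring R] (i j : m) (a : R) :
    Matrix.single i j (-a) = - Matrix.single i j a := by
  ext r c
  simp [Matrix.single]
  split <;> simp

lemma std_mul_eq {m : Type*} [DecidableEq m] [Fintype m] {R : Type*} [Ring R]
    (i j j' l : m) (u v : R) (h : j = j') :
    Matrix.single i j u * Matrix.single j' l v =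
      Matrix.single i l (u * v) := by
  subst h
  exact Matrix.single_mul_single_same (c := u) i j l v

theorem aux18 (R : Type*) [Ring R] (n : ℕ) (x : Fin n → R) (b : R) :
    ∀ d (hdn : d ≤ n),
    (((List.finRange n).drop (n - d)).map (fun i =>
        (1 : Matrix (Fin (n+1)) (Fin (n+1)) R) -
          Matrix.single (⟨i.1, by have := i.2; omega⟩ : Fin (n+1))
            (⟨i.1 + 1, by have := i.2; omega⟩ : Fin (n+1)) (x i))).prod
      * Matrix.single (⟨n, by omega⟩ : Fin (n+1)) (⟨0, by omega⟩ : Fin (n+1)) b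
    = ∑ j : Fin (d+1),
        Matrix.single (⟨n - d + j.1, by have := j.2; omega⟩ : Fin (n+1))
          (⟨0, by omega⟩ : Fin (n+1))
          ((-1 : R) ^ (d - j.1) * (((List.finRange n).drop (n - d + j.1)).map x).prod * b) := by
  intro d
  induction d with
  | zero =>
    intro hdn
    simp [List.drop_of_length_le, List.length_finRange]
  | succ d ih =>
    intro hdn
    have hd' : d ≤ n := by omega
    have hlt : n - (d+1) < (List.finRange n).length := by
      rw [List.length_finRange]; omega
    have hdrop : (List.finRange n).drop (n - (d+1)) =
        (⟨n - (d+1), by omega⟩ : Fin n) :: (List.finRange n).drop (n - d) := by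
      rw [List.drop_eq_getElem_cons hlt]
      congr 1
      · simp
      · congr 1; omega
    rw [hdrop, List.map_cons, List.prod_cons, mul_assoc, ih hd', sub_mul, one_mul,
      Finset.mul_sum]
    have hAT : (∑ i : Fin (d+1),
        Matrix.single
            (⟨((⟨n - (d+1), by omega⟩ : Fin n) : ℕ), by omega⟩ : Fin (n+1))
            (⟨((⟨n - (d+1), by omega⟩ : Fin n) : ℕ) + 1, by omega⟩ : Fin (n+1))
            (x ⟨n - (d+1), by omega⟩) *
          Matrix.single (⟨n - d + i.1, by have := i.2; omega⟩ : Fin (n+1))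
            (⟨0, by omega⟩ : Fin (n+1))
            ((-1 : R) ^ (d - i.1) * (((List.finRange n).drop (n - d + i.1)).map x).prod * b))
        = Matrix.single (⟨n - (d+1), by omega⟩ : Fin (n+1))
            (⟨0, by omega⟩ : Fin (n+1))
            (x ⟨n - (d+1), by omega⟩ *
              ((-1 : R) ^ (d - ((0 : Fin (d+1)) : ℕ)) *
                (((List.finRange n).drop (n - d + ((0 : Fin (d+1)) : ℕ))).map x).prod * b)) := by
      rw [Fin.sum_univ_succ]
      have hrest : ∀ i : Fin d,
          Matrix.single
            (⟨((⟨n - (d+1), by omega⟩ : Fin n) : ℕ), by omega⟩ : Fin (n+1))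
            (⟨((⟨n - (d+1), by omega⟩ : Fin n) : ℕ) + 1, by omega⟩ : Fin (n+1))
            (x ⟨n - (d+1), by omega⟩) *
          Matrix.single (⟨n - d + (i.succ : ℕ), by have := i.2; omega⟩ : Fin (n+1))
            (⟨0, by omega⟩ : Fin (n+1))
            ((-1 : R) ^ (d - (i.succ : ℕ)) *
              (((List.finRange n).drop (n - d + (i.succ : ℕ))).map x).prod * b) = 0 := by
        intro i
        apply Matrix.single_mul_single_of_ne
        apply Fin.ne_of_val_ne
        have := i.2
        simp
        omega
      rw [Finset.sum_eq_zero (fun i _ => hrest i), add_zero]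
      exact std_mul_eq _ _ _ _ _ _ (Fin.ext (by simp; omega))
    rw [hAT]
    conv_rhs => rw [Fin.sum_univ_succ]
    have hsum : ∑ i : Fin (d+1),
        Matrix.single (⟨n - (d+1) + ((i.succ : Fin (d+2)) : ℕ), by have := i.2; omega⟩ : Fin (n+1))
          (⟨0, by omega⟩ : Fin (n+1))
          ((-1 : R) ^ (d + 1 - ((i.succ : Fin (d+2)) : ℕ)) *
            (((List.finRange n).drop (n - (d+1) + ((i.succ : Fin (d+2)) : ℕ))).map x).prod * b)
        = ∑ j : Fin (d+1),
        Matrix.single (⟨n - d + j.1, by have := j.2; omega⟩ : Fin (n+1))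
          (⟨0, by omega⟩ : Fin (n+1))
          ((-1 : R) ^ (d - j.1) * (((List.finRange n).drop (n - d + j.1)).map x).prod * b) := by
      apply Finset.sum_congr rfl
      intro i _
      have h1 : n - (d+1) + ((i.succ : Fin (d+2)) : ℕ) = n - d + i.1 := by
        simp [Fin.val_succ]; omega
      have h2 : d + 1 - ((i.succ : Fin (d+2)) : ℕ) = d - i.1 := by
        simp [Fin.val_succ]
      simp only [h1, h2]
    rw [hsum]
    have hcoef : ((-1 : R) ^ (d + 1 - ((0 : Fin (d+2)) : ℕ)) *
        (((List.finRange n).drop (n - (d+1) + ((0 : Fin (d+2)) : ℕ))).map x).prod * b)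
        = -(x ⟨n - (d+1), by omega⟩ *
            ((-1 : R) ^ (d - ((0 : Fin (d+1)) : ℕ)) *
              (((List.finRange n).drop (n - d + ((0 : Fin (d+1)) : ℕ))).map x).prod * b)) := by
      have hdr : (List.finRange n).drop (n - (d+1) + ((0 : Fin (d+2)) : ℕ)) =
          (⟨n - (d+1), by omega⟩ : Fin n) ::
            (List.finRange n).drop (n - d + ((0 : Fin (d+1)) : ℕ)) := by
        simpa using hdrop
      rw [hdr, List.map_cons, List.prod_cons]
      have hcomm : ((-1 : R) ^ d) * x ⟨n - (d+1), by omega⟩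
          = x ⟨n - (d+1), by omega⟩ * ((-1 : R) ^ d) :=
        ((Commute.neg_one_left (x ⟨n - (d+1), by omega⟩)).pow_left d).eq
      simp only [Fin.val_zero, Nat.sub_zero, Nat.add_zero, pow_succ]
      calc (-1 : R) ^ d * -1 * (x ⟨n - (d+1), by omega⟩ *
              (((List.finRange n).drop (n - d)).map x).prod) * b
          = -(((-1 : R) ^ d * x ⟨n - (d+1), by omega⟩) *
              (((List.finRange n).drop (n - d)).map x).prod * b) := by
            noncomm_ring
        _ = -(x ⟨n - (d+1), by omega⟩ * ((-1 : R) ^ d *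
              (((List.finRange n).drop (n - d)).map x).prod * b)) := by
            rw [hcomm]; noncomm_ring
    have hfin : (⟨n - (d+1) + ((0 : Fin (d+2)) : ℕ), by omega⟩ : Fin (n+1))
        = (⟨n - (d+1), by omega⟩ : Fin (n+1)) := Fin.ext (by simp)
    rw [hfin, hcoef, std_neg]
    abel

theorem stmt18 (R : Type*) [Ring R] (q : ℕ) (hq : 1 ≤ q)
    (x : Fin (q - 1) → R) (b : R) :
    (((List.finRange (q - 1)).map (fun i =>
        (1 : Matrix (Fin q) (Fin q) R) -
          Matrix.single (⟨i.1, by have := i.2; omega⟩ : Fin q)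
            (⟨i.1 + 1, by have := i.2; omega⟩ : Fin q) (x i))).prod)
      * Matrix.single (⟨q - 1, by omega⟩ : Fin q) (⟨0, by omega⟩ : Fin q) b =
    ∑ j : Fin q,
      Matrix.single j (⟨0, by omega⟩ : Fin q)
        ((-1 : R) ^ (q - 1 - j.1) *
          ((((List.finRange (q - 1)).drop j.1).map x).prod) * b) := by
  obtain ⟨n, rfl⟩ : ∃ n, q = n + 1 := ⟨q - 1, by omega⟩
  have h := aux18 R n x b n le_rfl
  simp only [Nat.sub_self, Nat.zero_add, List.drop_zero, Fin.eta] at h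
  exact h
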